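/- Let P be an orthogonal projection and S a self-adjoint involution (S = S*, S² = 1) on a Hilbert space, and let 0 < α ≤ 1. Assume PSP ≥ αP and (1−P)S(1−P) ≤ 0. Then (1−P)S(1−P) ≤ −α(1−P). -/

import Mathlib

set_option maxHeartbeats 1000000
set_option synthInstance.maxHeartbeats 400000

private lemma smul_nonneg'' {W : Type*} [NormedAddCommGroup W] [InnerProductSpace ℂ W]
    [CompleteSpace W] (c : ℝ) (hc : 0 ≤ c) {x : W →L[ℂ] W} (hx : 0 ≤ x) : 0 ≤ c • x := by
  rw [ContinuousLinearMap.nonneg_iff_isPositive] at hx ⊢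
  constructor
  · rw [← ContinuousLinearMap.isSelfAdjoint_iff_isSymmetric]
    unfold IsSelfAdjoint
    rw [star_smul, star_trivial, hx.isSelfAdjoint.star_eq]
  · intro y
    have := hx.2 y
    simp only [ContinuousLinearMap.reApplyInnerSelf, ContinuousLinearMap.smul_apply] at this ⊢
    rw [← algebraMap_smul ℂ c (x y), inner_smul_left, RCLike.algebraMap_eq_ofReal,
      RCLike.conj_ofReal, RCLike.re_ofReal_mul]
    exact mul_nonneg hc this

theorem stmt8 {W : Type*} [NormedAddCommGroup W] [InnerProductSpace ℂ W] [CompleteSpace W]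
    (P S : W →L[ℂ] W) (hP : IsSelfAdjoint P) (hP2 : P * P = P)
    (hS : IsSelfAdjoint S) (hS2 : S * S = 1)
    (α : ℝ) (hα0 : 0 < α) (hα1 : α ≤ 1)
    (h1 : (P * S * P - (α : ℂ) • P).IsPositive)
    (h2 : (-((1 - P) * S * (1 - P))).IsPositive) :
    (-((1 - P) * S * (1 - P)) - (α : ℂ) • (1 - P)).IsPositive := by
  rw [← ContinuousLinearMap.nonneg_iff_isPositive] at h1 h2 ⊢
  have hcast : ∀ (r : ℝ) (x : W →L[ℂ] W), (r : ℂ) • x = r • x := fun r x => by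
    rw [← algebraMap_smul ℂ r x]; norm_num
  rw [hcast] at h1 ⊢
  set k : ℝ := (1 - α^2)/4 with hkdef
  have hk0 : (0:ℝ) ≤ k := by nlinarith
  set Q : W →L[ℂ] W := 1 - P with hQdef
  have hQ2 : Q * Q = Q := by
    rw [hQdef, sub_mul, mul_sub, mul_sub, hP2, one_mul, mul_one]; abel
  have hQsa : IsSelfAdjoint Q := ((IsSelfAdjoint.one (W →L[ℂ] W)).sub hP)
  set E : W →L[ℂ] W := (2:ℝ)⁻¹ • (1 + S) with hEdef
  have hEsa : IsSelfAdjoint E := by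
    unfold IsSelfAdjoint
    rw [hEdef, star_smul, star_trivial, star_add, star_one, hS.star_eq]
  have hE2 : E * E = E := by
    simp only [hEdef, smul_mul_assoc, mul_smul_comm, smul_smul, add_mul, mul_add,
      one_mul, mul_one, hS2]
    module
  have hP2' : ∀ x : W →L[ℂ] W, P * (P * x) = P * x := fun x => by rw [← mul_assoc, hP2]
  have hQ2' : ∀ x : W →L[ℂ] W, Q * (Q * x) = Q * x := fun x => by rw [← mul_assoc, hQ2]
  have hE2' : ∀ x : W →L[ℂ] W, E * (E * x) = E * x := fun x => by rw [← mul_assoc, hE2]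
  set b : W →L[ℂ] W := P * E * Q with hbdef
  set d : W →L[ℂ] W := Q * E * Q with hddef
  set T : W →L[ℂ] W := P * E * P with hTdef
  have hstarb : star b = Q * E * P := by
    rw [hbdef, star_mul, star_mul, hP.star_eq, hQsa.star_eq, hEsa.star_eq, mul_assoc]
  have hdsa : IsSelfAdjoint d := by
    unfold IsSelfAdjoint
    rw [hddef, star_mul, star_mul, hQsa.star_eq, hEsa.star_eq, mul_assoc]
  -- b * star b = T - T * T
  have hbb : b * star b = T - T * T := by
    rw [hstarb, hbdef, hTdef]
    simp only [hQdef, mul_sub, sub_mul, mul_one, one_mul, mul_assoc, hP2', hE2']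
    abel
  -- star b * b = d - d * d
  have hPdef : P = 1 - Q := by rw [hQdef]; abel
  have hdd : star b * b = d - d * d := by
    rw [hstarb, hbdef, hddef]
    simp only [hPdef, mul_sub, sub_mul, mul_one, one_mul, mul_assoc, hQ2', hE2']
    abel
  -- T = 2⁻¹ • (P + P*S*P),  d = 2⁻¹ • (Q + Q*S*Q)
  have hT_eq : T = (2:ℝ)⁻¹ • (P + P * S * P) := by
    rw [hTdef]
    simp only [hEdef, mul_smul_comm, smul_mul_assoc, mul_add, add_mul, mul_one, one_mul, hP2]
  have hd_eq : d = (2:ℝ)⁻¹ • (Q + Q * S * Q) := by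
    rw [hddef]
    simp only [hEdef, mul_smul_comm, smul_mul_assoc, mul_add, add_mul, mul_one, one_mul, hQ2]
  set M : W →L[ℂ] W := (2:ℝ)⁻¹ • (P * S * P - α • P) with hMdef
  have hM0 : 0 ≤ M := smul_nonneg'' _ (by norm_num) h1
  have hMsa : IsSelfAdjoint M :=
    ((ContinuousLinearMap.nonneg_iff_isPositive M).mp hM0).isSelfAdjoint
  -- key decomposition
  have key1 : algebraMap ℝ (W →L[ℂ] W) k - (T - T * T) = M * M + α • M + k • Q := by
    rw [Algebra.algebraMap_eq_smul_one, hQdef, hT_eq, hMdef]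
    simp only [smul_mul_assoc, mul_smul_comm, smul_smul, mul_add, add_mul, mul_sub, sub_mul,
      smul_sub, smul_add, mul_one, one_mul, mul_assoc, hP2', hP2, hkdef]
    module
  have hMM : 0 ≤ M * M := by
    have := star_mul_self_nonneg M
    rwa [hMsa.star_eq] at this
  have hQ0 : 0 ≤ Q := by
    have := star_mul_self_nonneg Q
    rwa [hQsa.star_eq, hQ2] at this
  have hTk : b * star b ≤ algebraMap ℝ (W →L[ℂ] W) k := by
    rw [hbb, ← sub_nonneg, key1]
    exact add_nonneg (add_nonneg hMM (smul_nonneg'' _ hα0.le hM0)) (smul_nonneg'' _ hk0 hQ0)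
  have hbk : star b * b ≤ algebraMap ℝ (W →L[ℂ] W) k := by
    rw [← CStarAlgebra.norm_le_iff_le_algebraMap _ hk0 (star_mul_self_nonneg b)]
    rw [CStarRing.norm_star_mul_self, ← CStarRing.norm_self_mul_star]
    exact (CStarAlgebra.norm_le_iff_le_algebraMap _ hk0 (mul_star_self_nonneg b)).mpr hTk
  have hddk : d - d * d ≤ algebraMap ℝ (W →L[ℂ] W) k := by rwa [hdd] at hbk
  -- d ≤ 2⁻¹
  have hdhalf : d ≤ algebraMap ℝ (W →L[ℂ] W) (2⁻¹) := by
    rw [← sub_nonneg, Algebra.algebraMap_eq_smul_one]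
    have hid : (2:ℝ)⁻¹ • (1 : W →L[ℂ] W) - d
        = (2:ℝ)⁻¹ • P + (2:ℝ)⁻¹ • (-(Q * S * Q)) := by
      rw [hd_eq, hQdef]
      module
    rw [hid]
    exact add_nonneg (smul_nonneg'' _ (by norm_num) (by
      have := star_mul_self_nonneg P
      rwa [hP.star_eq, hP2] at this)) (smul_nonneg'' _ (by norm_num) h2)
  -- spectrum facts
  have hspec1 : ∀ x ∈ spectrum ℝ d, x ≤ 2⁻¹ :=
    (le_algebraMap_iff_spectrum_le (a := d) hdsa).mp hdhalf
  have hcfc : cfc (fun x : ℝ => x - x^2) d = d - d * d := by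
    rw [cfc_sub ..]
    rw [cfc_id' .., cfc_pow_id .., pow_two]
  have hspec2 : ∀ x ∈ spectrum ℝ d, x - x^2 ≤ k :=
    (cfc_le_algebraMap_iff (fun x : ℝ => x - x^2) k d).mp (by rw [hcfc]; exact hddk)
  have hspec3 : ∀ x ∈ spectrum ℝ d, x ≤ (1 - α)/2 := by
    intro x hx
    have h5 := hspec1 x hx
    have h6 := hspec2 x hx
    nlinarith [h5, h6, hα0, hα1]
  have h8 : d ≤ algebraMap ℝ (W →L[ℂ] W) ((1 - α)/2) :=
    (le_algebraMap_iff_spectrum_le (a := d) hdsa).mpr hspec3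
  -- conjugate by Q
  have h9 := star_left_conjugate_le_conjugate h8 Q
  rw [hQsa.star_eq] at h9
  have hL : Q * d * Q = d := by
    rw [hddef]
    calc Q * (Q * E * Q) * Q = (Q * Q) * E * (Q * Q) := by noncomm_ring
    _ = Q * E * Q := by rw [hQ2]
  have hR : Q * algebraMap ℝ (W →L[ℂ] W) ((1 - α)/2) * Q = ((1 - α)/2) • Q := by
    rw [Algebra.algebraMap_eq_smul_one, mul_smul_comm, mul_one, smul_mul_assoc, hQ2]
  rw [hL, hR] at h9
  have h10 : 0 ≤ ((1 - α)/2) • Q - d := sub_nonneg.mpr h9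
  have idfin : -(Q * S * Q) - α • Q
      = (((1 - α)/2) • Q - d) + (((1 - α)/2) • Q - d) := by
    rw [hd_eq]
    module
  rw [idfin]
  exact add_nonneg h10 h10
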